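/- arXiv:2102.03896 — 5 statements merged into one kernel-verified Lean document; each statement's English description precedes it below -/
import Mathlib

section
/- Let C : ℝ^L → ℝ be continuous and strictly increasing in each coordinate and U : ℝ^L → ℝ continuous and strictly increasing in each coordinate. Suppose that for every u ∈ ℝ the set {s ∈ ℝ^L : C(s) ≤ 0 and U(s) ≥ u} is compact. Fix a nonempty proper subset J of {1,...,L}, a continuous strictly increasing proxy Ũ : ℝ^J → ℝ, a real u, and k ∉ J. Then there exists B ∈ ℝ such that if the lower bound b_k on coordinate k satisfies b_k < B, then every feasible path s^(t) with limsup_{t→∞} Ũ(s_J^(t)) = sup_{s feasible, s_i ≥ b_i ∀i} Ũ(s_J) satisfies liminf_{t→∞} U(s^(t)) ≤ u. -/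
def StrictIncEach {L : ℕ} (f : (Fin L → ℝ) → ℝ) : Prop :=
  ∀ s : Fin L → ℝ, ∀ i : Fin L, ∀ x : ℝ, s i < x → f s < f (Function.update s i x)

def StrictIncEachSub {L : ℕ} (J : Finset (Fin L)) (g : ({i // i ∈ J} → ℝ) → ℝ) : Prop :=
  ∀ s : {i // i ∈ J} → ℝ, ∀ j : {i // i ∈ J}, ∀ x : ℝ, s j < x → g s < g (Function.update s j x)

lemma StrictIncEach.mono' {L : ℕ} {f : (Fin L → ℝ) → ℝ} (hf : StrictIncEach f) :
    ∀ s t : Fin L → ℝ, (∀ i, s i ≤ t i) → f s ≤ f t := by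
  classical
  have key : ∀ A : Finset (Fin L), ∀ s t : Fin L → ℝ, (∀ i, s i ≤ t i) →
      (∀ i, i ∉ A → s i = t i) → f s ≤ f t := by
    intro A
    induction A using Finset.induction_on with
    | empty =>
      intro s t _ h
      have : s = t := funext fun i => h i (by simp)
      rw [this]
    | insert a A ha ih =>
      intro s t hle hout
      have h1 : f s ≤ f (Function.update s a (t a)) := by
        rcases lt_or_eq_of_le (hle a) with h | h
        · exact le_of_lt (hf s a (t a) h)
        · rw [← h, Function.update_eq_self]
      refine h1.trans (ih (Function.update s a (t a)) t ?_ ?_)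
      · intro i
        by_cases hi : i = a
        · subst hi; simp
        · rw [Function.update_of_ne hi]; exact hle i
      · intro i hi
        by_cases hia : i = a
        · subst hia; simp
        · rw [Function.update_of_ne hia]
          exact hout i (by simp [hia, hi])
  intro s t h
  exact key Finset.univ s t h (by simp)

lemma feas_compact {L : ℕ} {C U : (Fin L → ℝ) → ℝ} (hCc : Continuous C)
    (hUm : StrictIncEach U)
    (hcompact : ∀ u : ℝ, IsCompact {s : Fin L → ℝ | C s ≤ 0 ∧ u ≤ U s}) (b : Fin L → ℝ) :
    IsCompact {s : Fin L → ℝ | C s ≤ 0 ∧ ∀ i, b i ≤ s i} := by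
  apply IsCompact.of_isClosed_subset (hcompact (U b))
  · have : {s : Fin L → ℝ | C s ≤ 0 ∧ ∀ i, b i ≤ s i}
        = {s | C s ≤ 0} ∩ ⋂ i, {s | b i ≤ s i} := by
      ext s; simp [Set.mem_iInter]
    rw [this]
    exact (isClosed_le hCc continuous_const).inter
      (isClosed_iInter fun i => isClosed_le continuous_const (continuous_apply i))
  · intro s hs
    exact ⟨hs.1, hUm.mono' b s hs.2⟩

/-- Forward direction of the overoptimization theorem. -/
theorem stmt_1 {L : ℕ} (C U : (Fin L → ℝ) → ℝ)
    (hCc : Continuous C) (hCm : StrictIncEach C)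
    (hUc : Continuous U) (hUm : StrictIncEach U)
    (hcompact : ∀ u : ℝ, IsCompact {s : Fin L → ℝ | C s ≤ 0 ∧ u ≤ U s})
    (J : Finset (Fin L)) (hJne : J.Nonempty) (hJprop : J ≠ Finset.univ)
    (Ut : ({i // i ∈ J} → ℝ) → ℝ) (hUtc : Continuous Ut) (hUtm : StrictIncEachSub J Ut)
    (u : ℝ) (k : Fin L) (hk : k ∉ J) (b : Fin L → ℝ) :
    ∃ B : ℝ, ∀ bk : ℝ, bk < B →
      -- feasible set with lower bounds `Function.update b k bk`
      (∀ p : ℝ → Fin L → ℝ, Continuous p →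
        (∀ t : ℝ, C (p t) ≤ 0 ∧ ∀ i : Fin L, Function.update b k bk i ≤ p t i) →
        Filter.limsup (fun t => Ut (fun j : {i // i ∈ J} => p t j)) Filter.atTop =
          sSup ((fun s : Fin L → ℝ => Ut (fun j : {i // i ∈ J} => s j)) ''
            {s | C s ≤ 0 ∧ ∀ i : Fin L, Function.update b k bk i ≤ s i}) →
        Filter.liminf (fun t => U (p t)) Filter.atTop ≤ u) := by
  classical
  obtain ⟨j, hj⟩ := hJne
  have hjk : j ≠ k := fun h => hk (h ▸ hj)
  -- m : lower bound for coordinate k on the compact set K = {C ≤ 0 ∧ u ≤ U}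
  obtain ⟨m, hm⟩ : ∃ m : ℝ, ∀ s : Fin L → ℝ, C s ≤ 0 → u ≤ U s → m ≤ s k := by
    obtain ⟨m, hm⟩ := ((hcompact u).image (continuous_apply k)).bddBelow
    exact ⟨m, fun s h1 h2 => hm ⟨s, ⟨h1, h2⟩, rfl⟩⟩
  refine ⟨m - 1, ?_⟩
  intro bk hbk p hpc hfeas hsup
  set φ : (Fin L → ℝ) → ℝ := fun s => Ut (fun j : {i // i ∈ J} => s j) with hφ
  have hφc : Continuous φ :=
    hUtc.comp (continuous_pi fun jj => continuous_apply (jj : Fin L))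
  set F : Set (Fin L → ℝ) :=
    {s | C s ≤ 0 ∧ ∀ i, Function.update b k bk i ≤ s i} with hF
  have hFc : IsCompact F := feas_compact hCc hUm hcompact _
  have hpF : ∀ t, p t ∈ F := fun t => ⟨(hfeas t).1, (hfeas t).2⟩
  -- boundedness facts
  have hUlow : Filter.IsBoundedUnder (· ≥ ·) Filter.atTop (fun t => U (p t)) :=
    Filter.isBoundedUnder_of
      ⟨U (Function.update b k bk), fun t => hUm.mono' _ _ (hfeas t).2⟩
  have hφlow : Filter.IsBoundedUnder (· ≥ ·) Filter.atTop (fun t => φ (p t)) := by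
    obtain ⟨c, hc⟩ := (hFc.image hφc).bddBelow
    exact Filter.isBoundedUnder_of ⟨c, fun t => hc ⟨p t, hpF t, rfl⟩⟩
  by_contra hlim
  push_neg at hlim
  have hev : ∀ᶠ t in Filter.atTop, u < U (p t) :=
    Filter.eventually_lt_of_lt_liminf hlim hUlow
  -- the feasible set with lower bound m at coordinate k
  set F' : Set (Fin L → ℝ) :=
    {s | C s ≤ 0 ∧ ∀ i, Function.update b k m i ≤ s i} with hF'
  have hF'c : IsCompact F' := feas_compact hCc hUm hcompact _
  have hmem : ∀ᶠ t in Filter.atTop, p t ∈ F' := by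
    filter_upwards [hev] with t ht
    refine ⟨(hfeas t).1, fun i => ?_⟩
    by_cases hik : i = k
    · subst hik
      rw [Function.update_self]
      exact hm (p t) (hfeas t).1 (le_of_lt ht)
    · rw [Function.update_of_ne hik]
      have := (hfeas t).2 i
      rwa [Function.update_of_ne hik] at this
  have hF'ne : F'.Nonempty := by
    obtain ⟨t, ht⟩ := hmem.exists
    exact ⟨p t, ht⟩
  obtain ⟨sstar, hsF', hmax⟩ := hF'c.exists_isMaxOn hF'ne hφc.continuousOn
  have hsk : m ≤ sstar k := by
    have := hsF'.2 k
    rwa [Function.update_self] at this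
  -- lower coordinate k of sstar to m - 1, getting strict slack in C
  set s' : Fin L → ℝ := Function.update sstar k (m - 1) with hs'
  have hCs' : C s' < 0 := by
    have h := hCm s' k (sstar k) (by rw [hs', Function.update_self]; linarith)
    rw [hs', Function.update_idem, Function.update_eq_self] at h
    exact lt_of_lt_of_le h hsF'.1
  have hφeq : φ s' = φ sstar := by
    show Ut (fun jj : {i // i ∈ J} => s' jj) = Ut (fun jj : {i // i ∈ J} => sstar jj)
    congr 1
    funext jj
    exact Function.update_of_ne (fun h : (jj : Fin L) = k => hk (h ▸ jj.2)) _ _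
  -- bump coordinate j up while keeping C ≤ 0
  have hcont : Continuous fun x : ℝ => C (Function.update s' j x) :=
    hCc.comp (continuous_const.update j continuous_id)
  have hnb : ∀ᶠ x in nhds (s' j), C (Function.update s' j x) < 0 :=
    (hcont.tendsto (s' j)).eventually_lt_const (by rwa [Function.update_eq_self])
  obtain ⟨x, hx1, hx2⟩ :=
    ((hnb.filter_mono nhdsWithin_le_nhds).and eventually_mem_nhdsWithin).exists
      (f := nhdsWithin (s' j) (Set.Ioi (s' j)))
  set s'' : Fin L → ℝ := Function.update s' j x with hs''
  have hx2' : s' j < x := hx2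
  -- φ s'' > φ sstar
  have hrestr : (fun jj : {i // i ∈ J} => s'' (jj : Fin L))
      = Function.update (fun jj : {i // i ∈ J} => s' (jj : Fin L)) ⟨j, hj⟩ x := by
    funext jj
    by_cases hjj : jj = ⟨j, hj⟩
    · subst hjj
      rw [Function.update_self, hs'', Function.update_self]
    · have hne : (jj : Fin L) ≠ j := fun h => hjj (Subtype.ext h)
      rw [Function.update_of_ne hjj, hs'', Function.update_of_ne hne]
  have hφgt : φ sstar < φ s'' := by
    rw [← hφeq]
    show Ut (fun jj : {i // i ∈ J} => s' jj) < Ut (fun jj : {i // i ∈ J} => s'' jj)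
    rw [hrestr]
    exact hUtm _ ⟨j, hj⟩ x hx2'
  -- s'' is feasible for the bounds `Function.update b k bk`
  have hs''F : s'' ∈ F := by
    refine ⟨le_of_lt hx1, fun i => ?_⟩
    by_cases hik : i = k
    · subst hik
      rw [Function.update_self, hs'', Function.update_of_ne (Ne.symm hjk),
        hs', Function.update_self]
      linarith
    · rw [Function.update_of_ne hik]
      have hbmi : b i ≤ sstar i := by
        have := hsF'.2 i
        rwa [Function.update_of_ne hik] at this
      by_cases hij : i = j
      · subst hij
        rw [hs'', Function.update_self]
        have : s' i = sstar i := by rw [hs', Function.update_of_ne hik]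
        linarith [hx2']
      · rw [hs'', Function.update_of_ne hij, hs', Function.update_of_ne hik]
        exact hbmi
  have hle : φ s'' ≤ sSup (φ '' F) := le_csSup (hFc.image hφc).bddAbove ⟨s'', hs''F, rfl⟩
  have hφcob : Filter.IsCoboundedUnder (· ≤ ·) Filter.atTop (fun t => φ (p t)) :=
    hφlow.isCoboundedUnder_le
  have hlimsup_le : Filter.limsup (fun t => φ (p t)) Filter.atTop ≤ φ sstar := by
    apply Filter.limsup_le_of_le hφcob
    filter_upwards [hmem] with t ht
    exact hmax ht
  have hsup' : Filter.limsup (fun t => φ (p t)) Filter.atTop = sSup (φ '' F) := hsup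
  rw [hsup'] at hlimsup_le
  linarith
end

section
/- Suppose U(s) = Σ_i u_i(s_i) and C(s) = Σ_i c_i(s_i) with each u_i, c_i continuously differentiable and strictly increasing, c_i'(x) ≥ η > 0 for all i and x, and each sensitivity u_i'(x)/c_i'(x) non-increasing in x and tending to 0 as x → ∞. Then for every u ∈ ℝ the set {s ∈ ℝ^L : C(s) ≤ 0 and U(s) ≥ u} is compact. -/
open Set Filter

/-- If `deriv f ≤ μ * deriv g` on `[x,y]` then `f y - f x ≤ μ * (g y - g x)`. -/
private lemma compare_le (f g : ℝ → ℝ) (hf : Differentiable ℝ f) (hg : Differentiable ℝ g)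
    (μ : ℝ) {x y : ℝ} (hxy : x ≤ y)
    (h : ∀ t ∈ Set.Icc x y, deriv f t ≤ μ * deriv g t) :
    f y - f x ≤ μ * (g y - g x) := by
  have hd : Differentiable ℝ (fun t => μ * g t - f t) := (hg.const_mul μ).sub hf
  have hmono : MonotoneOn (fun t => μ * g t - f t) (Set.Icc x y) := by
    apply monotoneOn_of_deriv_nonneg (convex_Icc x y) hd.continuous.continuousOn
      hd.differentiableOn
    intro t ht
    have ht' : t ∈ Set.Icc x y := interior_subset ht
    have hder : deriv (fun t => μ * g t - f t) t = μ * deriv g t - deriv f t := by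
      rw [deriv_fun_sub ((hg t).const_mul μ) (hf t), deriv_const_mul μ (hg t)]
    rw [hder]
    linarith [h t ht']
  have := hmono (Set.left_mem_Icc.2 hxy) (Set.right_mem_Icc.2 hxy) hxy
  simp only [] at this
  linarith

/-- If `μ * deriv g ≤ deriv f` on `[x,y]` then `μ * (g y - g x) ≤ f y - f x`. -/
private lemma compare_ge (f g : ℝ → ℝ) (hf : Differentiable ℝ f) (hg : Differentiable ℝ g)
    (μ : ℝ) {x y : ℝ} (hxy : x ≤ y)
    (h : ∀ t ∈ Set.Icc x y, μ * deriv g t ≤ deriv f t) :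
    μ * (g y - g x) ≤ f y - f x := by
  have hd : Differentiable ℝ (fun t => f t - μ * g t) := hf.sub (hg.const_mul μ)
  have hmono : MonotoneOn (fun t => f t - μ * g t) (Set.Icc x y) := by
    apply monotoneOn_of_deriv_nonneg (convex_Icc x y) hd.continuous.continuousOn
      hd.differentiableOn
    intro t ht
    have ht' : t ∈ Set.Icc x y := interior_subset ht
    have hder : deriv (fun t => f t - μ * g t) t = deriv f t - μ * deriv g t := by
      rw [deriv_fun_sub (hf t) ((hg t).const_mul μ), deriv_const_mul μ (hg t)]
    rw [hder]
    linarith [h t ht']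
  have := hmono (Set.left_mem_Icc.2 hxy) (Set.right_mem_Icc.2 hxy) hxy
  simp only [] at this
  linarith

/-- Proposition 2: sufficient conditions for compactness of the feasible
upper-contour sets, with additively separable utility and constraint. -/
theorem stmt_4 {L : ℕ} (u c : Fin L → ℝ → ℝ) (η : ℝ) (hη : 0 < η)
    (hud : ∀ i, Differentiable ℝ (u i)) (hud' : ∀ i, Continuous (deriv (u i)))
    (hcd : ∀ i, Differentiable ℝ (c i)) (hcd' : ∀ i, Continuous (deriv (c i)))
    (hum : ∀ i, StrictMono (u i)) (hcm : ∀ i, StrictMono (c i))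
    (hcη : ∀ i x, η ≤ deriv (c i) x)
    (hsens_mono : ∀ i, Antitone (fun x => deriv (u i) x / deriv (c i) x))
    (hsens_lim : ∀ i, Filter.Tendsto (fun x => deriv (u i) x / deriv (c i) x)
      Filter.atTop (nhds 0)) :
    ∀ u0 : ℝ, IsCompact
      {s : Fin L → ℝ | (∑ i, c i (s i)) ≤ 0 ∧ u0 ≤ ∑ i, u i (s i)} := by
  intro u0
  -- The set is closed.
  have hcont_c : Continuous fun s : Fin L → ℝ => ∑ i, c i (s i) :=
    continuous_finset_sum _ fun i _ => (hcd i).continuous.comp (continuous_apply i)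
  have hcont_u : Continuous fun s : Fin L → ℝ => ∑ i, u i (s i) :=
    continuous_finset_sum _ fun i _ => (hud i).continuous.comp (continuous_apply i)
  have hclosed : IsClosed {s : Fin L → ℝ | (∑ i, c i (s i)) ≤ 0 ∧ u0 ≤ ∑ i, u i (s i)} := by
    have h1 : IsClosed {s : Fin L → ℝ | (∑ i, c i (s i)) ≤ 0} :=
      isClosed_le hcont_c continuous_const
    have h2 : IsClosed {s : Fin L → ℝ | u0 ≤ ∑ i, u i (s i)} :=
      isClosed_le continuous_const hcont_u
    exact h1.inter h2
  rcases Nat.eq_zero_or_pos L with hL | hL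
  · subst hL
    have : Subsingleton (Fin 0 → ℝ) := ⟨fun a b => funext fun i => absurd i.2 (by omega)⟩
    exact (Set.subsingleton_of_subsingleton).finite.isCompact
  haveI : Nonempty (Fin L) := ⟨⟨0, hL⟩⟩
  -- notation
  set σ : Fin L → ℝ → ℝ := fun i x => deriv (u i) x / deriv (c i) x with hσ
  have hc'pos : ∀ i t, 0 < deriv (c i) t := fun i t => lt_of_lt_of_le hη (hcη i t)
  -- positivity of the sensitivities
  have hσpos : ∀ i x, 0 < σ i x := by
    intro i x
    obtain ⟨z, hz, hz'⟩ := exists_hasDerivAt_eq_slope (u i) (deriv (u i))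
      (show x < x + 1 by linarith) ((hud i).continuous.continuousOn)
      (fun t _ => (hud i t).hasDerivAt)
    have huz : 0 < deriv (u i) z := by
      rw [hz']
      have h1 : 0 < u i (x + 1) - u i x := sub_pos.2 (hum i (by linarith))
      have h2 : (0:ℝ) < x + 1 - x := by linarith
      exact div_pos h1 h2
    have : 0 < σ i z := div_pos huz (hc'pos i z)
    exact lt_of_lt_of_le this (hsens_mono i hz.1.le)
  -- choose λ
  set lam : ℝ := (Finset.univ.inf' Finset.univ_nonempty fun i => σ i 0) / 2 with hlam
  have hinfpos : 0 < Finset.univ.inf' Finset.univ_nonempty fun i => σ i 0 := by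
    rw [Finset.lt_inf'_iff]
    exact fun i _ => hσpos i 0
  have hlampos : 0 < lam := by positivity
  have hlamlt : ∀ i, lam < σ i 0 := by
    intro i
    have h1 : (Finset.univ.inf' Finset.univ_nonempty fun i => σ i 0) ≤ σ i 0 :=
      Finset.inf'_le _ (Finset.mem_univ i)
    have : lam < Finset.univ.inf' Finset.univ_nonempty fun i => σ i 0 := by
      rw [hlam]; linarith
    linarith
  -- thresholds where sensitivity drops below lam/2
  have hR : ∀ i, ∃ R : ℝ, 0 ≤ R ∧ ∀ x ≥ R, σ i x ≤ lam / 2 := by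
    intro i
    have : ∀ᶠ x in atTop, σ i x < lam / 2 :=
      (hsens_lim i).eventually_lt_const (by positivity)
    obtain ⟨R, hR⟩ := eventually_atTop.1 this
    exact ⟨max R 0, le_max_right _ _, fun x hx => (hR x (le_trans (le_max_left _ _) hx)).le⟩
  choose R hR0 hRle using hR
  -- the auxiliary functions ψ i = u i - lam * c i
  set ψ : Fin L → ℝ → ℝ := fun i x => u i x - lam * c i x with hψ
  have hψcont : ∀ i, Continuous (ψ i) :=
    fun i => ((hud i).continuous).sub (continuous_const.mul (hcd i).continuous)
  -- c grows at least linearly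
  have hclin : ∀ i {x y : ℝ}, x ≤ y → η * (y - x) ≤ c i y - c i x := by
    intro i x y hxy
    have := compare_ge (c i) id (hcd i) differentiable_id η hxy (fun t _ => by
      rw [deriv_id]; simpa using hcη i t)
    simpa using this
  -- key estimate on the left: for x ≤ 0, ψ i x ≤ ψ i 0 + (σ i 0 - lam) * η * x
  have hleft : ∀ i x, x ≤ 0 → ψ i x ≤ ψ i 0 + (σ i 0 - lam) * η * x := by
    intro i x hx
    have hA : η * (0 - x) ≤ c i 0 - c i x := hclin i hx
    have hB : σ i 0 * (c i 0 - c i x) ≤ u i 0 - u i x := by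
      apply compare_ge (u i) (c i) (hud i) (hcd i) _ hx
      intro t ht
      have hmono := hsens_mono i ht.2
      have : σ i 0 ≤ σ i t := hmono
      have hct := hc'pos i t
      calc σ i 0 * deriv (c i) t ≤ σ i t * deriv (c i) t := by nlinarith
        _ = deriv (u i) t := by rw [hσ]; field_simp
    have hA0 : 0 ≤ c i 0 - c i x := by nlinarith
    have hσl : lam ≤ σ i 0 := (hlamlt i).le
    have : (σ i 0 - lam) * (η * (0 - x)) ≤ (σ i 0 - lam) * (c i 0 - c i x) :=
      mul_le_mul_of_nonneg_left hA (by linarith)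
    simp only [hψ]
    nlinarith
  -- key estimate on the right: for x ≥ R i, ψ i x ≤ ψ i (R i) - (lam/2) * η * (x - R i)
  have hright : ∀ i x, R i ≤ x → ψ i x ≤ ψ i (R i) - lam / 2 * η * (x - R i) := by
    intro i x hx
    have hA : η * (x - R i) ≤ c i x - c i (R i) := hclin i hx
    have hB : u i x - u i (R i) ≤ lam / 2 * (c i x - c i (R i)) := by
      apply compare_le (u i) (c i) (hud i) (hcd i) _ hx
      intro t ht
      have hσt : σ i t ≤ lam / 2 := hRle i t ht.1
      have hct := hc'pos i t
      calc deriv (u i) t = σ i t * deriv (c i) t := by rw [hσ]; field_simp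
        _ ≤ lam / 2 * deriv (c i) t := by nlinarith
    have : lam / 2 * (η * (x - R i)) ≤ lam / 2 * (c i x - c i (R i)) :=
      mul_le_mul_of_nonneg_left hA (by positivity)
    simp only [hψ]
    nlinarith
  clear_value ψ lam σ
  -- global upper bound M i on ψ i
  have hM : ∀ i, ∃ M : ℝ, ψ i 0 ≤ M ∧ ψ i (R i) ≤ M ∧ ∀ x, ψ i x ≤ M := by
    intro i
    obtain ⟨m, hm, hmax⟩ := isCompact_Icc.exists_isMaxOn (Set.nonempty_Icc.2 (hR0 i))
      ((hψcont i).continuousOn : ContinuousOn (ψ i) (Set.Icc 0 (R i)))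
    refine ⟨ψ i m, hmax (Set.left_mem_Icc.2 (hR0 i)), hmax (Set.right_mem_Icc.2 (hR0 i)), ?_⟩
    intro x
    have h0m : ψ i 0 ≤ ψ i m := hmax (Set.left_mem_Icc.2 (hR0 i))
    have hRm : ψ i (R i) ≤ ψ i m := hmax (Set.right_mem_Icc.2 (hR0 i))
    rcases le_total x 0 with hx | hx
    · have h1 := hleft i x hx
      have hD : 0 ≤ (σ i 0 - lam) * η := by
        have := hlamlt i
        nlinarith
      have h2 : (σ i 0 - lam) * η * x ≤ 0 :=
        mul_nonpos_of_nonneg_of_nonpos hD hx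
      linarith
    rcases le_total x (R i) with hx' | hx'
    · exact hmax ⟨hx, hx'⟩
    · have h1 := hright i x hx'
      have h2 : 0 ≤ lam / 2 * η * (x - R i) := by
        have h3 : 0 ≤ x - R i := by linarith
        positivity
      linarith
  choose M hM0 hMR hMall using hM
  -- lower bound constant per coordinate from membership in the set
  set K : Fin L → ℝ := fun i => u0 - ∑ j, M j + M i with hK
  have hKbound : ∀ s : Fin L → ℝ,
      s ∈ {s : Fin L → ℝ | (∑ i, c i (s i)) ≤ 0 ∧ u0 ≤ ∑ i, u i (s i)} →
      ∀ i, K i ≤ ψ i (s i) := by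
    intro s hs i
    obtain ⟨hsc, hsu⟩ := hs
    have hsum : u0 ≤ ∑ j, ψ j (s j) := by
      have : ∑ j, ψ j (s j) = (∑ j, u j (s j)) - lam * ∑ j, c j (s j) := by
        simp only [hψ, Finset.sum_sub_distrib, Finset.mul_sum]
      rw [this]
      nlinarith
    have hsplit : ∑ j, ψ j (s j) ≤ ψ i (s i) + (∑ j, M j - M i) := by
      have h1 : ∑ j, ψ j (s j) = ψ i (s i) + ∑ j ∈ Finset.univ.erase i, ψ j (s j) :=
        (Finset.add_sum_erase _ (fun j => ψ j (s j)) (Finset.mem_univ i)).symm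
      have h2 : ∑ j ∈ Finset.univ.erase i, ψ j (s j) ≤ ∑ j ∈ Finset.univ.erase i, M j :=
        Finset.sum_le_sum fun j _ => hMall j (s j)
      have h3 : ∑ j ∈ Finset.univ.erase i, M j = ∑ j, M j - M i := by
        rw [← Finset.add_sum_erase _ _ (Finset.mem_univ i)]; ring
      linarith [h1, h2, h3.le, h3.ge]
    simp only [hK]
    linarith
  -- coordinatewise bounds
  set b : Fin L → ℝ := fun i => min 0 ((K i - ψ i 0) / ((σ i 0 - lam) * η)) with hb
  set B : Fin L → ℝ := fun i => max (R i) (R i + (ψ i (R i) - K i) / (lam / 2 * η)) with hB2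
  have hsubset : {s : Fin L → ℝ | (∑ i, c i (s i)) ≤ 0 ∧ u0 ≤ ∑ i, u i (s i)} ⊆
      Set.pi Set.univ fun i => Set.Icc (b i) (B i) := by
    intro s hs i _
    have hKi := hKbound s hs i
    clear_value B b K
    simp only [hb, hB2]
    constructor
    · rcases le_total 0 (s i) with h | h
      · exact le_trans (min_le_left _ _) h
      · have h1 := hleft i (s i) h
        have hD : 0 < (σ i 0 - lam) * η := by
          have := hlamlt i; nlinarith
        have h2 : (K i - ψ i 0) / ((σ i 0 - lam) * η) ≤ s i := by
          rw [div_le_iff₀ hD]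
          have h3 : K i - ψ i 0 ≤ (σ i 0 - lam) * η * s i := by linarith
          have h4 : (σ i 0 - lam) * η * s i = s i * ((σ i 0 - lam) * η) := by ring
          linarith
        exact le_trans (min_le_right _ _) h2
    · rcases le_total (s i) (R i) with h | h
      · exact le_trans h (le_max_left _ _)
      · have h1 := hright i (s i) h
        have hD : 0 < lam / 2 * η := by positivity
        have h2 : s i ≤ R i + (ψ i (R i) - K i) / (lam / 2 * η) := by
          rw [← sub_le_iff_le_add', le_div_iff₀ hD]
          have h3 : lam / 2 * η * (s i - R i) ≤ ψ i (R i) - K i := by linarith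
          have h4 : lam / 2 * η * (s i - R i) = (s i - R i) * (lam / 2 * η) := by ring
          linarith
        exact le_trans h2 (le_max_right _ _)
  exact IsCompact.of_isClosed_subset
    (isCompact_univ_pi fun i => isCompact_Icc) hclosed hsubset
end

section
/- Let C : ℝ^L → ℝ be continuous and strictly increasing in each coordinate, and let s be a point with C(s) ≤ 0 and s_k > b_k for some coordinate k, where b_k is a lower bound on coordinate k. Then for any other coordinate j ≠ k there exist ε > 0 and δ > 0 with s_k − ε ≥ b_k such that C(s − ε e_k + δ e_j) ≤ 0; in particular, any continuous strictly increasing function of coordinate j can be strictly increased while remaining feasible. -/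
/-- Trade-off lemma: an attribute above its floor can be traded for a strict
increase in any other attribute while preserving feasibility. -/
theorem stmt_10 {L : ℕ} (C : (Fin L → ℝ) → ℝ) (hCc : Continuous C) (hCm : StrictIncEach C)
    (s : Fin L → ℝ) (hs : C s ≤ 0)
    (k : Fin L) (bk : ℝ) (hbk : bk < s k)
    (j : Fin L) (hjk : j ≠ k) :
    ∃ ε : ℝ, 0 < ε ∧ ∃ δ : ℝ, 0 < δ ∧ bk ≤ s k - ε ∧
      C (Function.update (Function.update s k (s k - ε)) j (s j + δ)) ≤ 0 ∧
      ∀ g : ℝ → ℝ, Continuous g → StrictMono g → g (s j) < g (s j + δ) := by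
  set ε : ℝ := (s k - bk) / 2 with hε
  have hε0 : 0 < ε := by simp [hε]; linarith
  have hεb : bk ≤ s k - ε := by simp [hε]; linarith
  set p : Fin L → ℝ := Function.update s k (s k - ε) with hp
  have hps : Function.update p k (s k) = s := by
    rw [hp, Function.update_idem, Function.update_eq_self]
  have hpneg : C p < 0 := by
    have h1 : C p < C (Function.update p k (s k)) := by
      apply hCm
      simp [hp]; linarith
    rw [hps] at h1; linarith
  -- continuity in coordinate j
  have hFcont : Continuous (fun t : ℝ => C (Function.update p j t)) := by
    apply hCc.comp
    apply continuous_pi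
    intro i
    by_cases hij : i = j
    · subst hij; simp [Function.update_self]; exact continuous_id
    · simp only [Function.update_of_ne hij]; exact continuous_const
  have hpj : p j = s j := by simp [hp, Function.update_of_ne hjk]
  have hmem : (fun t : ℝ => C (Function.update p j t)) ⁻¹' Set.Iio 0 ∈ nhds (s j) := by
    apply (isOpen_Iio.preimage hFcont).mem_nhds
    simp only [Set.mem_preimage, Set.mem_Iio]
    rw [← hpj, Function.update_eq_self]; exact hpneg
  rcases Metric.mem_nhds_iff.mp hmem with ⟨r, hr0, hr⟩
  refine ⟨ε, hε0, r / 2, by linarith, hεb, ?_, ?_⟩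
  · have : s j + r / 2 ∈ Metric.ball (s j) r := by
      simp [Metric.mem_ball, Real.dist_eq]
      rw [abs_of_pos (by linarith)]; linarith
    have := hr this
    simp only [Set.mem_preimage, Set.mem_Iio] at this
    exact le_of_lt this
  · intro g _ hg
    exact hg (by linarith)
end

section
/- Under the hypotheses of Proposition 2 (additively separable U, C; c_i' ≥ η > 0; sensitivities u_i'/c_i' non-increasing and tending to 0), let v be a unit vector with at least one strictly positive and at least one strictly negative component, and s^(0) feasible. If s^(0) + tv remains feasible for all t ≥ 0, then U(s^(0) + tv) → −∞ as t → ∞. -/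
lemma mono_deriv_nonneg {f : ℝ → ℝ} (hf : Differentiable ℝ f) (hm : Monotone f) (x : ℝ) :
    0 ≤ deriv f x := by
  have h := hasDerivAt_iff_tendsto_slope.mp (hf x).hasDerivAt
  refine ge_of_tendsto h ?_
  filter_upwards [self_mem_nhdsWithin] with y hy
  have hy' : y ≠ x := hy
  rw [slope_def_field]
  rcases lt_or_gt_of_ne hy' with h1 | h1
  · have : f y ≤ f x := hm h1.le
    rw [← neg_div_neg_eq]
    exact div_nonneg (by linarith) (by linarith)
  · have : f x ≤ f y := hm h1.le
    exact div_nonneg (by linarith) (by linarith)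

lemma key_ineq {f g : ℝ → ℝ} (hf : Differentiable ℝ f) (hg : Differentiable ℝ g)
    {a b : ℝ} (hab : a ≤ b) (h : ∀ x, a ≤ x → x ≤ b → deriv f x ≤ deriv g x) :
    f b - f a ≤ g b - g a := by
  have hd : Differentiable ℝ (fun x => g x - f x) := hg.sub hf
  have hm : MonotoneOn (fun x => g x - f x) (Set.Icc a b) := by
    refine monotoneOn_of_deriv_nonneg (convex_Icc a b) hd.continuous.continuousOn
      hd.differentiableOn ?_
    intro x hx
    rw [interior_Icc] at hx
    rw [deriv_fun_sub (hg x) (hf x)]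
    have := h x hx.1.le hx.2.le
    linarith
  have := hm (Set.left_mem_Icc.mpr hab) (Set.right_mem_Icc.mpr hab) hab
  simp only at this
  linarith

/-- Along a feasible ray with mixed-sign direction, utility diverges to `-∞`. -/
theorem stmt_12 {L : ℕ} (u c : Fin L → ℝ → ℝ) (η : ℝ) (hη : 0 < η)
    (hud : ∀ i, Differentiable ℝ (u i)) (hcd : ∀ i, Differentiable ℝ (c i))
    (hum : ∀ i, StrictMono (u i)) (hcm : ∀ i, StrictMono (c i))
    (hcη : ∀ i x, η ≤ deriv (c i) x)
    (hsens_mono : ∀ i, Antitone (fun x => deriv (u i) x / deriv (c i) x))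
    (hsens_lim : ∀ i, Filter.Tendsto (fun x => deriv (u i) x / deriv (c i) x)
      Filter.atTop (nhds 0))
    (v : Fin L → ℝ) (hvunit : ‖v‖ = 1)
    (hvpos : ∃ i, 0 < v i) (hvneg : ∃ i, v i < 0)
    (s0 : Fin L → ℝ) (hs0 : (∑ i, c i (s0 i)) ≤ 0)
    (hfeas : ∀ t : ℝ, 0 ≤ t → (∑ i, c i (s0 i + t * v i)) ≤ 0) :
    Filter.Tendsto (fun t : ℝ => ∑ i, u i (s0 i + t * v i)) Filter.atTop Filter.atBot := by
  classical
  obtain ⟨i₀, hi₀⟩ := hvneg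
  have hne : Nonempty (Fin L) := ⟨i₀⟩
  -- basic derivative facts
  have hc' : ∀ i x, 0 < deriv (c i) x := fun i x => lt_of_lt_of_le hη (hcη i x)
  have hu' : ∀ i x, 0 ≤ deriv (u i) x :=
    fun i x => mono_deriv_nonneg (hud i) (hum i).monotone x
  -- sensitivities are strictly positive
  have hspos : ∀ i x, 0 < deriv (u i) x / deriv (c i) x := by
    intro i x
    by_contra hcon
    push_neg at hcon
    have h0 : ∀ y, x ≤ y → deriv (u i) y ≤ 0 := by
      intro y hy
      have hq : deriv (u i) y / deriv (c i) y ≤ 0 := le_trans (hsens_mono i hy) hcon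
      have heq : deriv (u i) y = (deriv (u i) y / deriv (c i) y) * deriv (c i) y :=
        (div_mul_cancel₀ _ (ne_of_gt (hc' i y))).symm
      nlinarith [hc' i y]
    have hanti : AntitoneOn (u i) (Set.Ici x) := by
      refine antitoneOn_of_deriv_nonpos (convex_Ici x) (hud i).continuous.continuousOn
        (hud i).differentiableOn ?_
      intro y hy
      rw [interior_Ici, Set.mem_Ioi] at hy
      exact h0 y hy.le
    have h1 : u i (x + 1) ≤ u i x :=
      hanti Set.self_mem_Ici (by simp : x + 1 ∈ Set.Ici x) (by linarith)
    exact absurd (hum i (lt_add_one x)) (not_lt.mpr h1)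
  -- the floor sensitivity ρ and the threshold ε
  set ρ : ℝ := Finset.univ.inf' Finset.univ_nonempty
      (fun i => deriv (u i) (s0 i) / deriv (c i) (s0 i)) with hρdef
  have hρpos : 0 < ρ := by
    rw [hρdef, Finset.lt_inf'_iff]
    exact fun i _ => hspos i (s0 i)
  have hρle : ∀ i, ρ ≤ deriv (u i) (s0 i) / deriv (c i) (s0 i) :=
    fun i => Finset.inf'_le _ (Finset.mem_univ i)
  set ε : ℝ := ρ / 2 with hεdef
  have hεpos : 0 < ε := by rw [hεdef]; linarith
  have hρeq : ρ = ε + ε := by rw [hεdef]; ring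
  -- choose points beyond which sensitivities are ≤ ε
  have hXex : ∀ i, ∃ X : ℝ, ∀ x, X ≤ x → deriv (u i) x / deriv (c i) x ≤ ε := by
    intro i
    have := (hsens_lim i).eventually (eventually_le_nhds hεpos)
    rw [Filter.eventually_atTop] at this
    exact this
  choose X hX using hXex
  set A : Fin L → ℝ := fun i => max (s0 i) (X i) with hAdef
  set δ : ℝ := ε * (η * (-v i₀)) with hδdef
  have hδpos : 0 < δ := by
    rw [hδdef]
    have : 0 < -v i₀ := by linarith
    positivity
  set C : ℝ := (∑ i, u i (A i)) + ε * (-(∑ i, c i (s0 i))) with hCdef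
  -- eventually all increasing coordinates pass their thresholds
  have hEv : ∀ᶠ t : ℝ in Filter.atTop, ∀ i, 0 < v i → A i ≤ s0 i + t * v i := by
    rw [Filter.eventually_all]
    intro i
    by_cases hvi : 0 < v i
    · have ht : Filter.Tendsto (fun t : ℝ => s0 i + t * v i) Filter.atTop Filter.atTop :=
        Filter.tendsto_atTop_add_const_left _ _
          (Filter.Tendsto.atTop_mul_const hvi Filter.tendsto_id)
      exact (ht.eventually_ge_atTop (A i)).mono fun t h _ => h
    · exact Filter.Eventually.of_forall fun t h => absurd h hvi
  -- the main eventual bound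
  have hbound : ∀ᶠ t : ℝ in Filter.atTop,
      (∑ i, u i (s0 i + t * v i)) ≤ C - δ * t := by
    filter_upwards [hEv, Filter.eventually_ge_atTop (0 : ℝ)] with t hA ht
    set w : Fin L → ℝ := fun i => if 0 < v i then ε else ρ with hwdef
    set Δ : Fin L → ℝ := fun i => c i (s0 i + t * v i) - c i (s0 i) with hΔdef
    -- per-coordinate bound
    have hper : ∀ i, u i (s0 i + t * v i) ≤ u i (A i) + w i * Δ i := by
      intro i
      by_cases hvi : 0 < v i
      · -- increasing coordinate
        have hab : A i ≤ s0 i + t * v i := hA i hvi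
        have hk := key_ineq (hud i) ((hcd i).const_mul ε) hab ?cond
        case cond =>
          intro x hx _
          rw [deriv_const_mul ε ((hcd i) x)]
          have h1 : deriv (u i) x / deriv (c i) x ≤ deriv (u i) (X i) / deriv (c i) (X i) :=
            hsens_mono i (le_trans (le_max_right (s0 i) (X i)) hx)
          have h2 : deriv (u i) (X i) / deriv (c i) (X i) ≤ ε := hX i (X i) le_rfl
          have := (div_le_iff₀ (hc' i x)).mp (h1.trans h2)
          linarith
      -- hk : u i (s0 i + t*v i) - u i (A i) ≤ ε * c i (s0 i + t*v i) - ε * c i (A i)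
        have hcA : c i (s0 i) ≤ c i (A i) := (hcm i).monotone (le_max_left _ _)
        have hw : w i = ε := if_pos hvi
        rw [hw, hΔdef]
        beta_reduce
        nlinarith [hεpos.le]
      · -- non-increasing coordinate
        have hvle : v i ≤ 0 := not_lt.mp hvi
        have hab : s0 i + t * v i ≤ s0 i := by nlinarith
        have hk := key_ineq ((hcd i).const_mul ρ) (hud i) hab ?cond
        case cond =>
          intro x _ hx
          rw [deriv_const_mul ρ ((hcd i) x)]
          have h1 : deriv (u i) (s0 i) / deriv (c i) (s0 i) ≤ deriv (u i) x / deriv (c i) x :=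
            hsens_mono i hx
          have := (le_div_iff₀ (hc' i x)).mp (le_trans (hρle i) h1)
          linarith
        have huA : u i (s0 i) ≤ u i (A i) := (hum i).monotone (le_max_left _ _)
        have hw : w i = ρ := if_neg hvi
        rw [hw, hΔdef]
        beta_reduce
        linarith
    -- split the index set
    set SP : Finset (Fin L) := Finset.univ.filter (fun i => 0 < v i) with hSPdef
    set SN : Finset (Fin L) := Finset.univ.filter (fun i => ¬ 0 < v i) with hSNdef
    set a1 : ℝ := ∑ i ∈ SP, c i (s0 i + t * v i) with ha1
    set a2 : ℝ := ∑ i ∈ SN, c i (s0 i + t * v i) with ha2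
    set b1 : ℝ := ∑ i ∈ SP, c i (s0 i) with hb1
    set b2 : ℝ := ∑ i ∈ SN, c i (s0 i) with hb2
    have hsplita : a1 + a2 = ∑ i, c i (s0 i + t * v i) :=
      Finset.sum_filter_add_sum_filter_not Finset.univ _ _
    have hsplitb : b1 + b2 = ∑ i, c i (s0 i) :=
      Finset.sum_filter_add_sum_filter_not Finset.univ _ _
    have hbudget : a1 + a2 ≤ 0 := by rw [hsplita]; exact hfeas t ht
    have hb0 : b1 + b2 ≤ 0 := by rw [hsplitb]; exact hs0
    -- the weighted sum of constraint changes
    have hsumw : ∑ i, w i * Δ i = ε * (a1 - b1) + ρ * (a2 - b2) := by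
      rw [← Finset.sum_filter_add_sum_filter_not Finset.univ (fun i => 0 < v i)
        (fun i => w i * Δ i)]
      congr 1
      · calc ∑ i ∈ SP, w i * Δ i = ∑ i ∈ SP, ε * Δ i := by
              refine Finset.sum_congr rfl fun i hi => ?_
              rw [hwdef]
              simp only
              rw [if_pos (Finset.mem_filter.mp hi).2]
          _ = ε * ∑ i ∈ SP, Δ i := (Finset.mul_sum _ _ _).symm
          _ = ε * (a1 - b1) := by rw [hΔdef, Finset.sum_sub_distrib, ← ha1, ← hb1]
      · calc ∑ i ∈ SN, w i * Δ i = ∑ i ∈ SN, ρ * Δ i := by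
              refine Finset.sum_congr rfl fun i hi => ?_
              rw [hwdef]
              simp only
              rw [if_neg (Finset.mem_filter.mp hi).2]
          _ = ρ * ∑ i ∈ SN, Δ i := (Finset.mul_sum _ _ _).symm
          _ = ρ * (a2 - b2) := by rw [hΔdef, Finset.sum_sub_distrib, ← ha2, ← hb2]
    -- the decrease along the strictly negative coordinate
    have hi₀mem : i₀ ∈ SN := Finset.mem_filter.mpr ⟨Finset.mem_univ _, not_lt.mpr hi₀.le⟩
    have hΔi₀ : Δ i₀ ≤ η * v i₀ * t := by
      have hab : s0 i₀ + t * v i₀ ≤ s0 i₀ := by nlinarith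
      have hk := key_ineq (f := fun x : ℝ => η * x) (differentiable_id.const_mul η)
        (hcd i₀) hab ?cond
      case cond =>
        intro x _ _
        have : deriv (fun x : ℝ => η * x) x = η := by
          simp [deriv_const_mul η differentiableAt_fun_id]
        rw [this]
        exact hcη i₀ x
      rw [hΔdef]
      simp only
      nlinarith
    have hΔnonpos : ∀ i ∈ SN, Δ i ≤ 0 := by
      intro i hi
      have hvle : v i ≤ 0 := not_lt.mp (Finset.mem_filter.mp hi).2
      have : s0 i + t * v i ≤ s0 i := by nlinarith
      have := (hcm i).monotone this
      rw [hΔdef]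
      simp only
      linarith
    have hSNsum : a2 - b2 ≤ η * v i₀ * t := by
      have heq : Δ i₀ + ∑ i ∈ SN.erase i₀, Δ i = ∑ i ∈ SN, Δ i :=
        Finset.add_sum_erase SN Δ hi₀mem
      have herase : ∑ i ∈ SN.erase i₀, Δ i ≤ 0 :=
        Finset.sum_nonpos fun i hi => hΔnonpos i (Finset.mem_of_mem_erase hi)
      have hΔsum : ∑ i ∈ SN, Δ i = a2 - b2 := by
        rw [hΔdef, Finset.sum_sub_distrib, ← ha2, ← hb2]
      linarith
    -- put everything together
    have hmain : ∑ i, u i (s0 i + t * v i) ≤ (∑ i, u i (A i)) + (ε * (a1 - b1) + ρ * (a2 - b2)) := by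
      calc ∑ i, u i (s0 i + t * v i) ≤ ∑ i, (u i (A i) + w i * Δ i) :=
            Finset.sum_le_sum fun i _ => hper i
        _ = (∑ i, u i (A i)) + ∑ i, w i * Δ i := Finset.sum_add_distrib
        _ = (∑ i, u i (A i)) + (ε * (a1 - b1) + ρ * (a2 - b2)) := by rw [hsumw]
    have key1 : ε * (a1 - b1) + ρ * (a2 - b2) ≤ ε * (-(b1 + b2)) + ε * (a2 - b2) := by
      have h1 : ε * (a1 - b1) ≤ ε * ((-a2) - b1) :=
        mul_le_mul_of_nonneg_left (by linarith) hεpos.le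
      have e : ε * ((-a2) - b1) + ρ * (a2 - b2) = ε * (-(b1 + b2)) + ε * (a2 - b2) := by
        rw [hρeq]; ring
      linarith
    have key2 : ε * (a2 - b2) ≤ -(δ * t) := by
      have h2 : ε * (a2 - b2) ≤ ε * (η * v i₀ * t) :=
        mul_le_mul_of_nonneg_left hSNsum hεpos.le
      have e : ε * (η * v i₀ * t) = -(δ * t) := by rw [hδdef]; ring
      linarith
    have hC : C = (∑ i, u i (A i)) + ε * (-(b1 + b2)) := by
      rw [hCdef, hsplitb]
    rw [hC]
    linarith
  -- conclude
  refine Filter.tendsto_atBot_mono' Filter.atTop hbound ?_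
  have h1 : Filter.Tendsto (fun t : ℝ => δ * t) Filter.atTop Filter.atTop :=
    Filter.Tendsto.const_mul_atTop hδpos Filter.tendsto_id
  have h2 : Filter.Tendsto (fun t : ℝ => -(δ * t)) Filter.atTop Filter.atBot :=
    Filter.tendsto_neg_atBot_iff.mpr h1
  have h3 := Filter.tendsto_atBot_add_const_left Filter.atTop C h2
  refine h3.congr fun t => ?_
  ring
end

section
/- Let f : [0,∞) → ℝ^L be continuous and define s^(t) = s^(0) + ∫_0^t f(u) du. Suppose ‖f(u)‖ ≤ ε for all u. Then for all t ∈ [0, δ], ‖s^(t) − s^(0)‖ ≤ εδ. Consequently, if the closed εδ-ball around s^(0) is contained in a set N on which increases of a proxy Ũ imply increases of U (relative to s^(0)), then any such rate-bounded optimization over the interval [0, δ] that strictly increases Ũ strictly increases U. -/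
open MeasureTheory

/-- Rate-bounded interactive optimization: a speed limit on the rate function keeps
the state in the local-improvement neighborhood for time `δ`, so proxy gains are
true-utility gains. -/
theorem stmt_13 {L : ℕ} (f : ℝ → Fin L → ℝ) (hf : Continuous f)
    (s0 : Fin L → ℝ) (ε δ : ℝ) (hε : 0 ≤ ε) (hδ : 0 ≤ δ)
    (hbound : ∀ t : ℝ, ‖f t‖ ≤ ε)
    (s : ℝ → Fin L → ℝ) (hs : ∀ t : ℝ, s t = s0 + ∫ x in (0:ℝ)..t, f x) :
    (∀ t ∈ Set.Icc (0:ℝ) δ, ‖s t - s0‖ ≤ ε * δ) ∧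
    ∀ N : Set (Fin L → ℝ), Metric.closedBall s0 (ε * δ) ⊆ N →
      ∀ U Ut : (Fin L → ℝ) → ℝ,
        (∀ x ∈ N, Ut s0 < Ut x → U s0 < U x) →
        ∀ t ∈ Set.Icc (0:ℝ) δ, Ut s0 < Ut (s t) → U s0 < U (s t) := by
  have key : ∀ t ∈ Set.Icc (0:ℝ) δ, ‖s t - s0‖ ≤ ε * δ := by
    intro t ht
    rw [hs t]
    simp only [add_sub_cancel_left]
    calc ‖∫ x in (0:ℝ)..t, f x‖ ≤ ε * |t - 0| :=
          intervalIntegral.norm_integral_le_of_norm_le_const fun x _ => hbound x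
      _ ≤ ε * δ := by
          rw [sub_zero, abs_of_nonneg ht.1]
          exact mul_le_mul_of_nonneg_left ht.2 hε
  refine ⟨key, fun N hN U Ut hUt t ht hlt => ?_⟩
  exact hUt (s t) (hN (by simpa [Metric.mem_closedBall, dist_eq_norm] using key t ht)) hlt
end
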